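/- arXiv:2509.22875 — 6 statements merged into one kernel-verified Lean document; each statement's English description precedes it below -/
import Mathlib

section
/- Let A be a real vector space and μ : A × A → A a bilinear map that is a KV-structure (i.e. its KV-anomaly vanishes identically). Then μ is a Poisson structure (skew-symmetric, satisfying the Jacobi identity and the Leibniz rule) if and only if μ is skew-symmetric and μ(w, μ(u,v)) = 0 for all u, v, w ∈ A. -/
/-- For a bilinear map `μ` on a real vector space `A` with vanishing
KV-anomaly, `μ` is a Poisson structure (skew-symmetric + Jacobi + Leibniz) iff
`μ` is skew-symmetric and `μ w (μ u v) = 0` for all `u v w`. -/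
theorem kv_poisson_characterization
    {A : Type*} [AddCommGroup A] [Module ℝ A]
    (μ : A →ₗ[ℝ] A →ₗ[ℝ] A)
    (hKV : ∀ a b c : A,
      μ (μ a b) c - μ a (μ b c) - μ (μ b a) c + μ b (μ a c) = 0) :
    ((∀ a b : A, μ a b = -μ b a) ∧
     (∀ a b c : A, μ a (μ b c) + μ b (μ c a) + μ c (μ a b) = 0) ∧
     (∀ a b c : A, μ (μ a b) c = μ a (μ b c) + μ b (μ a c)))
    ↔
    ((∀ a b : A, μ a b = -μ b a) ∧
     (∀ u v w : A, μ w (μ u v) = 0)) := by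
  constructor
  · rintro ⟨hs, hj, hl⟩
    refine ⟨hs, fun u v w => ?_⟩
    have key : ∀ a b c : A, μ (μ a b) c = 0 := by
      intro a b c
      have h1 := hKV a b c
      have h2 := hj a b c
      have e1 : μ (μ b a) c = - μ (μ a b) c := by rw [hs b a]; simp
      have e2 : μ b (μ c a) = - μ b (μ a c) := by rw [hs c a]; simp
      have e3 : μ c (μ a b) = - μ (μ a b) c := hs c (μ a b)
      rw [e1] at h1
      rw [e2, e3] at h2
      have h1' : μ (μ a b) c - μ a (μ b c) + μ (μ a b) c + μ b (μ a c) = 0 := by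
        rw [← h1]; abel
      have h2' : μ a (μ b c) - μ b (μ a c) - μ (μ a b) c = 0 := by
        rw [← h2]; abel
      calc μ (μ a b) c
          = (μ (μ a b) c - μ a (μ b c) + μ (μ a b) c + μ b (μ a c))
            + (μ a (μ b c) - μ b (μ a c) - μ (μ a b) c) := by abel
        _ = 0 := by rw [h1', h2', add_zero]
    rw [hs w (μ u v), key u v w, neg_zero]
  · rintro ⟨hs, hz⟩
    have key : ∀ a b c : A, μ (μ a b) c = 0 := fun a b c => by
      rw [hs (μ a b) c, hz, neg_zero]
    exact ⟨hs, fun a b c => by rw [hz, hz, hz]; simp,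
      fun a b c => by rw [key, hz, hz]; simp⟩
end

section
/- Let A be a real vector space and μ : A × A → A a bilinear map with vanishing KV-anomaly that is skew-symmetric and satisfies the Jacobi identity and the Leibniz rule. Then for all u, v, w ∈ A one has μ(w, μ(u,v)) = 0. -/
/-- If a bilinear map `μ` on a real vector space has vanishing
KV-anomaly, is skew-symmetric, and satisfies the Jacobi identity and the
Leibniz rule, then `μ w (μ u v) = 0` for all `u v w`. -/
theorem kv_poisson_necessary
    {A : Type*} [AddCommGroup A] [Module ℝ A]
    (μ : A →ₗ[ℝ] A →ₗ[ℝ] A)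
    (hKV : ∀ a b c : A,
      μ (μ a b) c - μ a (μ b c) - μ (μ b a) c + μ b (μ a c) = 0)
    (hskew : ∀ a b : A, μ a b = -μ b a)
    (hjacobi : ∀ a b c : A, μ a (μ b c) + μ b (μ c a) + μ c (μ a b) = 0)
    (hleibniz : ∀ a b c : A, μ (μ a b) c = μ a (μ b c) + μ b (μ a c)) :
    ∀ u v w : A, μ w (μ u v) = 0 := by
  have key : ∀ a b c : A, μ a (μ b c) + (3:ℝ) • μ b (μ a c) = 0 := by
    intro a b c
    have h1 := hKV a b c
    rw [hskew b a, map_neg, LinearMap.neg_apply, hleibniz] at h1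
    calc μ a (μ b c) + (3:ℝ) • μ b (μ a c)
        = (μ a (μ b c) + μ b (μ a c)) - μ a (μ b c) -
            -(μ a (μ b c) + μ b (μ a c)) + μ b (μ a c) := by module
      _ = 0 := h1
  intro u v w
  have h1 := key w u v
  have h2 := key u w v
  have h8 : (8:ℝ) • μ w (μ u v) = 0 := by
    calc (8:ℝ) • μ w (μ u v)
        = (3:ℝ) • (μ u (μ w v) + (3:ℝ) • μ w (μ u v)) -
            (μ w (μ u v) + (3:ℝ) • μ u (μ w v)) := by module
      _ = 0 := by rw [h1, h2]; simp
  rcases smul_eq_zero.mp h8 with h | h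
  · norm_num at h
  · exact h
end

section
/- Fix x₀, y₀ ∈ ℝ with x₀ ≠ 0 and y₀ = 0, and let μ_P((x,y),(x′,y′)) = ((xy′ − x′y)x₀, (xy′ − x′y)y₀). A linear map f : ℝ² → ℝ², f(x,y) = (αx + βy, γx + λy), satisfies δ¹f = 0 if and only if γ = λ = 0; that is, ker δ¹ is the two-dimensional space of linear maps whose second component vanishes. -/
/-- For `x₀ ≠ 0`, `y₀ = 0` and
`μ_P (x,y) (x',y') = ((x*y'-x'*y)*x₀, (x*y'-x'*y)*y₀)`, a linear map
`f (x,y) = (α*x + β*y, γ*x + λ*y)` satisfies `δ¹f = 0` iff `γ = λ = 0`,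
i.e. iff the second component of `f` vanishes. -/
theorem ker_delta1_case (x₀ y₀ α β γ lam : ℝ)
    (hx₀ : x₀ ≠ 0) (hy₀ : y₀ = 0)
    (μP : ℝ × ℝ → ℝ × ℝ → ℝ × ℝ)
    (hμ : ∀ u v : ℝ × ℝ,
      μP u v = ((u.1 * v.2 - v.1 * u.2) * x₀, (u.1 * v.2 - v.1 * u.2) * y₀))
    (f : (ℝ × ℝ) →ₗ[ℝ] (ℝ × ℝ))
    (hf : ∀ x y : ℝ, f (x, y) = (α * x + β * y, γ * x + lam * y)) :
    ((∀ u v : ℝ × ℝ, μP u (f v) - μP v (f u) - f (μP u v) = 0)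
      ↔ (γ = 0 ∧ lam = 0)) ∧
    ((∀ u v : ℝ × ℝ, μP u (f v) - μP v (f u) - f (μP u v) = 0)
      ↔ (∀ u : ℝ × ℝ, (f u).2 = 0)) := by
  have hfu : ∀ u : ℝ × ℝ, f u = (α * u.1 + β * u.2, γ * u.1 + lam * u.2) := by
    intro u; rw [← hf u.1 u.2]
  have key : (∀ u v : ℝ × ℝ, μP u (f v) - μP v (f u) - f (μP u v) = 0)
      ↔ (γ = 0 ∧ lam = 0) := by
    constructor
    · intro h
      have h1 := h (1, 0) (0, 1)
      simp only [hμ, hfu, hy₀, Prod.ext_iff, Prod.fst_sub, Prod.snd_sub,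
        Prod.fst_zero, Prod.snd_zero] at h1
      obtain ⟨e1, e2⟩ := h1
      have hg : γ * x₀ = 0 := by linear_combination -e2
      have hl : lam * x₀ = 0 := by linear_combination e1
      exact ⟨(mul_eq_zero.mp hg).resolve_right hx₀,
        (mul_eq_zero.mp hl).resolve_right hx₀⟩
    · rintro ⟨hg, hl⟩ u v
      simp only [hμ, hfu, hy₀, hg, hl]
      apply Prod.ext <;> simp <;> ring
  refine ⟨key, key.trans ?_⟩
  constructor
  · rintro ⟨hg, hl⟩ u; simp [hfu, hg, hl]
  · intro h
    have h1 := h (1, 0)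
    have h2 := h (0, 1)
    simp [hfu] at h1 h2
    exact ⟨h1, h2⟩
end

section
/- Fix x₀, y₀ ∈ ℝ with x₀ ≠ 0, and let μ_P((x,y),(x′,y′)) = ((xy′ − x′y)x₀, (xy′ − x′y)y₀). Then every linear map f : ℝ² → ℝ² with δ¹f = 0 lies in the image of δ⁰: there exists ξ ∈ ℝ² such that f(u) = μ_P(u,ξ) for all u ∈ ℝ². In other words, the first KV-Poisson cohomology group H¹_P(μ_P) = ker δ¹ / im δ⁰ is trivial. -/
/-- For `x₀ ≠ 0` and
`μ_P (x,y) (x',y') = ((x*y'-x'*y)*x₀, (x*y'-x'*y)*y₀)`, every linear map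
`f : ℝ² → ℝ²` with `δ¹f = 0` is of the form `f = δ⁰ξ`, i.e.
`f u = μ_P u ξ` for some `ξ`: the first cohomology group
`H¹_P(μ_P) = ker δ¹ / im δ⁰` is trivial. -/
theorem H1_trivial (x₀ y₀ : ℝ) (hx₀ : x₀ ≠ 0)
    (μP : ℝ × ℝ → ℝ × ℝ → ℝ × ℝ)
    (hμ : ∀ u v : ℝ × ℝ,
      μP u v = ((u.1 * v.2 - v.1 * u.2) * x₀, (u.1 * v.2 - v.1 * u.2) * y₀)) :
    ∀ f : (ℝ × ℝ) →ₗ[ℝ] (ℝ × ℝ),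
      (∀ u v : ℝ × ℝ, μP u (f v) - μP v (f u) - f (μP u v) = 0) →
      ∃ ξ : ℝ × ℝ, ∀ u : ℝ × ℝ, f u = μP u ξ := by
  intro f hf
  obtain ⟨a, b⟩ : ∃ a b, f (1, 0) = (a, b) := ⟨_, _, rfl⟩
  obtain ⟨b, hab⟩ := b
  obtain ⟨c, d, hcd⟩ : ∃ c d, f (0, 1) = (c, d) := ⟨_, _, rfl⟩
  have key := hf (1, 0) (0, 1)
  rw [hμ, hμ, hμ, hab, hcd] at key
  have hfxy : f ((1 * 1 - 0 * 0) * x₀, (1 * 1 - 0 * 0) * y₀)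
      = (x₀ * a + y₀ * c, x₀ * b + y₀ * d) := by
    have h : ((1 * 1 - 0 * 0) * x₀, (1 * 1 - 0 * 0) * y₀)
        = x₀ • ((1 : ℝ), (0 : ℝ)) + y₀ • ((0 : ℝ), (1 : ℝ)) := by
      simp [Prod.ext_iff]
    rw [h, map_add, map_smul, map_smul, hab, hcd]
    simp [Prod.ext_iff, mul_comm]
  rw [hfxy] at key
  simp only [Prod.ext_iff, Prod.sub_def, Prod.fst_zero, Prod.snd_zero] at key
  obtain ⟨k1, k2⟩ := key
  have e1 : d * x₀ = c * y₀ := by linear_combination k1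
  have e2 : a * y₀ = b * x₀ := by linear_combination k2
  refine ⟨(-c / x₀, a / x₀), fun u => ?_⟩
  have hu : u = u.1 • ((1 : ℝ), (0 : ℝ)) + u.2 • ((0 : ℝ), (1 : ℝ)) := by
    simp [Prod.ext_iff]
  rw [hμ]
  calc f u = u.1 • f (1, 0) + u.2 • f (0, 1) := by
        conv_lhs => rw [hu]
        rw [map_add, map_smul, map_smul]
    _ = _ := by
        rw [hab, hcd]
        simp only [Prod.ext_iff, Prod.smul_mk, Prod.fst_add, Prod.snd_add,
          smul_eq_mul, Prod.smul_fst, Prod.smul_snd]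
        have p1 : u.1 * (a * y₀) = u.1 * (b * x₀) := by rw [e2]
        have p2 : u.2 * (d * x₀) = u.2 * (c * y₀) := by rw [e1]
        constructor <;> field_simp <;> linarith [p1, p2]
end

section
/- Fix x₀, y₀ ∈ ℝ and let μ_P((x,y),(x′,y′)) = ((xy′ − x′y)x₀, (xy′ − x′y)y₀). Then for every alternating bilinear map f : ℝ² × ℝ² → ℝ² and all u, v, w ∈ ℝ², (δ²f)(u,v,w) = μ_P(u,f(v,w)) − μ_P(v,f(u,w)) + μ_P(w,f(u,v)) − f(μ_P(u,v),w) − f(μ_P(v,w),u) + f(μ_P(u,w),v) = 0. In particular ker δ² = χ²(ℝ²), the whole space of alternating bilinear maps ℝ² × ℝ² → ℝ². -/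
/-- For `μ_P (x,y) (x',y') = ((x*y'-x'*y)*x₀, (x*y'-x'*y)*y₀)`
and every alternating bilinear map `f : ℝ² × ℝ² → ℝ²`, one has
`(δ²f)(u,v,w) = 0` for all `u v w`: `ker δ² = χ²(ℝ²)`. -/
theorem delta2_vanishes (x₀ y₀ : ℝ)
    (μP : ℝ × ℝ → ℝ × ℝ → ℝ × ℝ)
    (hμ : ∀ u v : ℝ × ℝ,
      μP u v = ((u.1 * v.2 - v.1 * u.2) * x₀, (u.1 * v.2 - v.1 * u.2) * y₀)) :
    ∀ f : (ℝ × ℝ) →ₗ[ℝ] (ℝ × ℝ) →ₗ[ℝ] (ℝ × ℝ),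
      (∀ u : ℝ × ℝ, f u u = 0) →
      ∀ u v w : ℝ × ℝ,
        μP u (f v w) - μP v (f u w) + μP w (f u v)
          - f (μP u v) w - f (μP v w) u + f (μP u w) v = 0 := by
  intro f hf u v w
  have hanti : ∀ a b : ℝ × ℝ, f a b = - f b a := by
    intro a b
    have h1 := hf (a + b)
    simp only [map_add, LinearMap.add_apply, hf a, hf b, zero_add, add_zero] at h1
    exact eq_neg_of_add_eq_zero_right h1
  have hdecomp : ∀ a : ℝ × ℝ, a = a.1 • ((1, 0) : ℝ × ℝ) + a.2 • ((0, 1) : ℝ × ℝ) := by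
    intro a
    apply Prod.ext <;> simp
  have key : ∀ a b : ℝ × ℝ,
      f a b = (a.1 * b.2 - a.2 * b.1) • f (1, 0) (0, 1) := by
    intro a b
    calc f a b
        = f (a.1 • ((1, 0) : ℝ × ℝ) + a.2 • ((0, 1) : ℝ × ℝ))
            (b.1 • ((1, 0) : ℝ × ℝ) + b.2 • ((0, 1) : ℝ × ℝ)) := by
          rw [← hdecomp a, ← hdecomp b]
      _ = (a.1 * b.2 - a.2 * b.1) • f (1, 0) (0, 1) := by
          simp only [map_add, map_smul, LinearMap.add_apply, LinearMap.smul_apply,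
            hf ((1, 0) : ℝ × ℝ), hf ((0, 1) : ℝ × ℝ), smul_zero,
            hanti ((0, 1) : ℝ × ℝ) ((1, 0) : ℝ × ℝ)]
          module
  set c : ℝ × ℝ := f (1, 0) (0, 1) with hc
  simp only [hμ, key]
  apply Prod.ext <;> simp <;> ring
end

section
/- Fix x₀, y₀ ∈ ℝ with x₀ ≠ 0, and let μ_P((x,y),(x′,y′)) = ((xy′ − x′y)x₀, (xy′ − x′y)y₀). Then every alternating bilinear map g : ℝ² × ℝ² → ℝ² is in the image of δ¹: there exists a linear map f : ℝ² → ℝ² with g(u,v) = μ_P(u,f(v)) − μ_P(v,f(u)) − f(μ_P(u,v)) for all u, v ∈ ℝ². Consequently the second KV-Poisson cohomology group H²_P(μ_P) = ker δ² / im δ¹ is trivial. -/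
/-- For `x₀ ≠ 0` and
`μ_P (x,y) (x',y') = ((x*y'-x'*y)*x₀, (x*y'-x'*y)*y₀)`, every alternating
bilinear map `g : ℝ² × ℝ² → ℝ²` is of the form `δ¹f` for some linear map
`f`; hence `H²_P(μ_P) = ker δ² / im δ¹` is trivial. -/
theorem H2_trivial (x₀ y₀ : ℝ) (hx₀ : x₀ ≠ 0)
    (μP : ℝ × ℝ → ℝ × ℝ → ℝ × ℝ)
    (hμ : ∀ u v : ℝ × ℝ,
      μP u v = ((u.1 * v.2 - v.1 * u.2) * x₀, (u.1 * v.2 - v.1 * u.2) * y₀)) :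
    ∀ g : (ℝ × ℝ) →ₗ[ℝ] (ℝ × ℝ) →ₗ[ℝ] (ℝ × ℝ),
      (∀ u : ℝ × ℝ, g u u = 0) →
      ∃ f : (ℝ × ℝ) →ₗ[ℝ] (ℝ × ℝ), ∀ u v : ℝ × ℝ,
        g u v = μP u (f v) - μP v (f u) - f (μP u v) := by
  intro g hg
  set c : ℝ × ℝ := g (1, 0) (0, 1) with hc
  have hskew : ∀ u v : ℝ × ℝ, g u v = - g v u := by
    intro u v
    have h := hg (u + v)
    simp only [map_add, LinearMap.add_apply, hg, zero_add, add_zero] at h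
    exact eq_neg_of_add_eq_zero_right h
  have key : ∀ u v : ℝ × ℝ, g u v = (u.1 * v.2 - v.1 * u.2) • c := by
    intro u v
    have hu : u = u.1 • ((1:ℝ), (0:ℝ)) + u.2 • ((0:ℝ), (1:ℝ)) := by
      simp [Prod.ext_iff]
    have hv : v = v.1 • ((1:ℝ), (0:ℝ)) + v.2 • ((0:ℝ), (1:ℝ)) := by
      simp [Prod.ext_iff]
    conv_lhs => rw [hu, hv]
    have h21 : g ((0:ℝ), (1:ℝ)) ((1:ℝ), (0:ℝ)) = -c := by
      rw [hskew]
    simp only [map_add, map_smul, LinearMap.add_apply, LinearMap.smul_apply,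
      hg, h21, ← hc, smul_zero, smul_neg, zero_add, add_zero, smul_smul]
    rw [sub_smul]
    module
  refine ⟨{ toFun := fun p => (0, (c.1 * p.2 - c.2 * p.1) / x₀),
            map_add' := ?_, map_smul' := ?_ }, ?_⟩
  · intro p q
    rw [Prod.ext_iff]
    constructor
    · simp
    · simp only [Prod.snd_add, Prod.fst_add]
      field_simp
      ring
  · intro a p
    rw [Prod.ext_iff]
    constructor
    · simp
    · simp only [Prod.smul_snd, Prod.smul_fst, smul_eq_mul, RingHom.id_apply]
      field_simp
  · intro u v
    rw [key, hμ, hμ, hμ]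
    simp only [LinearMap.coe_mk, AddHom.coe_mk]
    apply Prod.ext
    · simp only [Prod.smul_fst, smul_eq_mul, Prod.fst_sub]
      field_simp
      ring
    · simp only [Prod.smul_snd, smul_eq_mul, Prod.snd_sub]
      field_simp
      ring
end
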